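/- Let m ≥ 2, let γ, u ∈ ℝ, let k ≥ 0 and θ ∈ [0, 2π), and set 𝐤 = (k cos θ, k sin θ). Then U(θ)* Ĥ(𝐤; γ, u) U(θ) = Ĥ(k; γ, u), i.e., the bulk Hamiltonian at any wavevector 𝐤 of modulus k is unitarily conjugate, via the explicit diagonal unitary U(θ), to the bulk Hamiltonian at the real wavevector (k, 0). -/
import Mathlib


open Matrix Complex

/-- Potential at layer `j` (1-indexed, `1 ≤ j ≤ m`): `u_j = (u/(m−1))·(j − (m+1)/2)`. -/
noncomputable def layerPot (m : ℕ) (u : ℝ) (j : ℕ) : ℝ :=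
  (u / ((m : ℝ) - 1)) * ((j : ℝ) - ((m : ℝ) + 1) / 2)

/-- The `2m×2m` bulk Hamiltonian symbol `Ĥ(𝐤; γ, u)`: block-tridiagonal, with `j`-th
diagonal `2×2` block `u_j I₂ + kx σ₁ + ky σ₂`, superdiagonal blocks `γA` and
subdiagonal blocks `γA*`, where `A = [[0,0],[1,0]]`. -/
noncomputable def Hbulk (m : ℕ) (γ u kx ky : ℝ) :
    Matrix (Fin (2 * m)) (Fin (2 * m)) ℂ :=
  Matrix.of fun i j =>
    if (i : ℕ) = (j : ℕ) then ((layerPot m u ((i : ℕ) / 2 + 1) : ℝ) : ℂ)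
    else if (i : ℕ) + 1 = (j : ℕ) then
      (if (i : ℕ) % 2 = 0 then ((kx : ℂ) - (ky : ℂ) * Complex.I) else ((γ : ℝ) : ℂ))
    else if (j : ℕ) + 1 = (i : ℕ) then
      (if (j : ℕ) % 2 = 0 then ((kx : ℂ) + (ky : ℂ) * Complex.I) else ((γ : ℝ) : ℂ))
    else 0

/-- The diagonal unitary `U(θ) = diag(1, e^{iθ}, e^{iθ}, e^{2iθ}, …, e^{i(m−1)θ}, e^{imθ})`:
its `p`-th diagonal entry (0-indexed) is `e^{i⌊(p+1)/2⌋θ}`. -/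
noncomputable def Umat (m : ℕ) (θ : ℝ) : Matrix (Fin (2 * m)) (Fin (2 * m)) ℂ :=
  Matrix.diagonal fun i => Complex.exp (Complex.I * (θ : ℂ) * ((((i : ℕ) + 1) / 2 : ℕ) : ℂ))

lemma star_exp_I_mul (θ : ℝ) (a : ℕ) :
    star (Complex.exp (Complex.I * (θ : ℂ) * (a : ℂ)))
      = Complex.exp (-(Complex.I * (θ : ℂ) * (a : ℂ))) := by
  rw [Complex.star_def, ← Complex.exp_conj]
  congr 1
  simp [Complex.conj_I]

lemma exp_mul_exp_mul (x y z c : ℂ) (h : x + y + z = 0) :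
    Complex.exp x * (c * Complex.exp y) * Complex.exp z = c := by
  have h2 : Complex.exp x * (c * Complex.exp y) * Complex.exp z
      = c * Complex.exp (x + y + z) := by
    rw [Complex.exp_add, Complex.exp_add]; ring
  rw [h2, h, Complex.exp_zero, mul_one]

lemma phase_cancel (θ : ℝ) (a b : ℕ) (h : a = b) (c : ℂ) :
    star (Complex.exp (Complex.I * (θ : ℂ) * (a : ℂ))) * c
      * Complex.exp (Complex.I * (θ : ℂ) * (b : ℂ)) = c := by
  subst h
  rw [star_exp_I_mul]
  have := exp_mul_exp_mul (-(Complex.I * (θ : ℂ) * (a : ℂ))) 0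
    (Complex.I * (θ : ℂ) * (a : ℂ)) c (by ring)
  simpa using this

lemma phase_up (θ k : ℝ) (a b : ℕ) (h : b = a + 1) :
    star (Complex.exp (Complex.I * (θ : ℂ) * (a : ℂ)))
      * (((k * Real.cos θ : ℝ) : ℂ) - ((k * Real.sin θ : ℝ) : ℂ) * Complex.I)
      * Complex.exp (Complex.I * (θ : ℂ) * (b : ℂ)) = (k : ℂ) := by
  subst h
  rw [star_exp_I_mul]
  have hc : (((k * Real.cos θ : ℝ) : ℂ) - ((k * Real.sin θ : ℝ) : ℂ) * Complex.I)
      = (k : ℂ) * Complex.exp ((-(θ : ℂ)) * Complex.I) := by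
    rw [Complex.exp_mul_I, Complex.cos_neg, Complex.sin_neg]
    push_cast [Complex.ofReal_cos, Complex.ofReal_sin]
    ring
  rw [hc]
  exact exp_mul_exp_mul _ _ _ _ (by push_cast; ring)

lemma phase_down (θ k : ℝ) (a b : ℕ) (h : a = b + 1) :
    star (Complex.exp (Complex.I * (θ : ℂ) * (a : ℂ)))
      * (((k * Real.cos θ : ℝ) : ℂ) + ((k * Real.sin θ : ℝ) : ℂ) * Complex.I)
      * Complex.exp (Complex.I * (θ : ℂ) * (b : ℂ)) = (k : ℂ) := by
  subst h
  rw [star_exp_I_mul]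
  have hc : (((k * Real.cos θ : ℝ) : ℂ) + ((k * Real.sin θ : ℝ) : ℂ) * Complex.I)
      = (k : ℂ) * Complex.exp ((θ : ℂ) * Complex.I) := by
    rw [Complex.exp_mul_I]
    push_cast [Complex.ofReal_cos, Complex.ofReal_sin]
    ring
  rw [hc]
  exact exp_mul_exp_mul _ _ _ _ (by push_cast; ring)

/-- for `k ≥ 0`, `θ ∈ [0, 2π)` and `𝐤 = (k cos θ, k sin θ)`,
`U(θ)* Ĥ(𝐤; γ, u) U(θ) = Ĥ((k,0); γ, u)`. -/
theorem rotation_conjugation (m : ℕ) (hm : 2 ≤ m) (γ u : ℝ) (k θ : ℝ)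
    (hk : 0 ≤ k) (hθ0 : 0 ≤ θ) (hθ1 : θ < 2 * Real.pi) :
    (Umat m θ)ᴴ * Hbulk m γ u (k * Real.cos θ) (k * Real.sin θ) * Umat m θ
      = Hbulk m γ u k 0 := by
  ext i j
  rw [Umat, Matrix.diagonal_conjTranspose]
  rw [Matrix.mul_diagonal, Matrix.diagonal_mul]
  simp only [Hbulk, Matrix.of_apply, Pi.star_apply]
  split_ifs with h1 h2 h3 h4 h5
  · exact phase_cancel θ _ _ (by omega) _
  · have hb : ((j : ℕ) + 1) / 2 = ((i : ℕ) + 1) / 2 + 1 := by omega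
    rw [hb]
    push_cast
    rw [show ((((i:ℕ)+1)/2 : ℕ) : ℂ) + 1 = ((((i:ℕ)+1)/2 + 1 : ℕ) : ℂ) by push_cast; ring] at *
    simpa using phase_up θ k (((i:ℕ)+1)/2) _ rfl
  · exact phase_cancel θ _ _ (by omega) _
  · have ha : ((i : ℕ) + 1) / 2 = ((j : ℕ) + 1) / 2 + 1 := by omega
    simpa using phase_down θ k _ _ ha
  · exact phase_cancel θ _ _ (by omega) _
  · simp
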